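/- Let (G,K) be a Gelfand pair of finite groups, with 1_K^G = ⊕_{r=0}^s V_r the multiplicity-free decomposition (V_0 trivial), d_r = dim V_r, spherical functions ω_r(x) = (1/|K|) Σ_{k∈K} χ^{(r)}(x^{-1}k), and double cosets K_0, ..., K_s of K in G with representatives g_0, ..., g_s (g_0 the identity). Fix a double coset K_u and for m ≥ 1 and 0 ≤ r ≤ s let p_m(K_r) = #{(x_1, ..., x_m) ∈ K_u^m : x_1 ⋯ x_m ∈ K_r}/|K_u|^m, the probability that a product of m independent uniform elements of K_u lies in K_r. Then p_m(K_r) = |K_r| · Σ_{i=0}^s (d_i/|G|) ω_i(g_u)^m conj(ω_i(g_r)). -/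

import Mathlib

open scoped BigOperators Classical
open CategoryTheory

/-- `χ : G → ℂ` is an irreducible character of `G`. -/
def IsIrrChar (G : Type) [Group G] (χ : G → ℂ) : Prop :=
  ∃ V : FDRep ℂ G, Simple V ∧ χ = FDRep.character V

/-- The data of a Gelfand pair `(G, K)`: the induced representation `1_K^G` decomposes
multiplicity-freely as `⊕_{r=0}^s V_r` with `V_0` trivial, `χ r` and `d r` are the character
and dimension of `V_r`, and `g r` are representatives of the `s+1` double cosets of `K`
in `G`, with `g 0 = 1`. -/
structure GelfandPairData (G : Type) [Group G] [Fintype G] where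
  /-- the subgroup `K` -/
  K : Subgroup G
  /-- `s + 1` is the number of irreducible constituents of `1_K^G` -/
  s : ℕ
  /-- the irreducible characters of the constituents `V_r` -/
  χ : Fin (s + 1) → G → ℂ
  /-- the dimensions `d_r = dim V_r` -/
  d : Fin (s + 1) → ℕ
  /-- double coset representatives `g_0, …, g_s` -/
  g : Fin (s + 1) → G
  irr : ∀ r, IsIrrChar G (χ r)
  dim_eq : ∀ r, χ r 1 = (d r : ℂ)
  triv : χ 0 = fun _ => 1
  inj : Function.Injective χ
  /-- each `V_r` occurs in `1_K^G` with multiplicity exactly one -/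
  mult_one : ∀ r, (Nat.card K : ℂ)⁻¹ * (∑ᶠ k ∈ (K : Set G), χ r k) = 1
  /-- multiplicity-freeness/completeness: every irreducible character of `G` either does not
  occur in `1_K^G` or is one of the `χ r` -/
  gelfand : ∀ ψ : G → ℂ, IsIrrChar G ψ →
    (∑ᶠ k ∈ (K : Set G), ψ k) = 0 ∨ ∃ r, ψ = χ r
  g_zero : g 0 = 1
  /-- the double cosets `K g_r K` are pairwise distinct -/
  coset_disjoint : ∀ r t : Fin (s + 1), r ≠ t →
    Disjoint {x | ∃ k₁ ∈ K, ∃ k₂ ∈ K, x = k₁ * g r * k₂}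
      {x | ∃ k₁ ∈ K, ∃ k₂ ∈ K, x = k₁ * g t * k₂}
  /-- the double cosets `K g_r K` cover `G` -/
  coset_cover : ∀ x : G, ∃ r : Fin (s + 1), ∃ k₁ ∈ K, ∃ k₂ ∈ K, x = k₁ * g r * k₂

namespace GelfandPairData

variable {G : Type} [Group G] [Fintype G]

/-- The double coset `K_r = K g_r K`. -/
def DC (D : GelfandPairData G) (r : Fin (D.s + 1)) : Set G :=
  {x | ∃ k₁ ∈ D.K, ∃ k₂ ∈ D.K, x = k₁ * D.g r * k₂}

/-- The spherical function `ω_r(x) = (1/|K|) Σ_{k ∈ K} χ^{(r)}(x⁻¹ k)`. -/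
noncomputable def ω (D : GelfandPairData G) (r : Fin (D.s + 1)) (x : G) : ℂ :=
  (Nat.card D.K : ℂ)⁻¹ * ∑ᶠ k ∈ (D.K : Set G), D.χ r (x⁻¹ * k)

end GelfandPairData


set_option linter.unusedSectionVars false

open CategoryTheory LinearMap Module

section P2aux


variable {G : Type} [Group G] [Fintype G]

/-- auxiliary: powers wrap mod n when x^n = 1 -/
lemma pow_mod_eq {M : Type*} [Monoid M] {x : M} {n : ℕ} (hx : x ^ n = 1) (a : ℕ) :
    x ^ a = x ^ (a % n) := by
  conv_lhs => rw [← Nat.div_add_mod a n]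
  rw [pow_add, pow_mul, hx, one_pow, one_mul]

lemma pow_eq_of_modEq {M : Type*} [Monoid M] {x : M} {n : ℕ} (hx : x ^ n = 1) {a b : ℕ}
    (h : a ≡ b [MOD n]) : x ^ a = x ^ b := by
  rw [pow_mod_eq hx a, pow_mod_eq hx b, h]

/-- **P2**: over ℂ, the character at `g⁻¹` is the conjugate of the character at `g`. -/
theorem char_inv_eq_conj (V : FDRep ℂ G) (g : G) :
    V.character g⁻¹ = (starRingEnd ℂ) (V.character g) := by
  classical
  set n := Fintype.card G with hn
  have hnpos : 0 < n := Fintype.card_pos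
  haveI : NeZero n := ⟨hnpos.ne'⟩
  set A : V →ₗ[ℂ] V := V.ρ g with hAdef
  have hA : A ^ n = 1 := by
    rw [hAdef, ← map_pow, pow_card_eq_one, map_one]
  set ζ : ℂ := Complex.exp (2 * Real.pi * Complex.I / n) with hζdef
  have hζ : IsPrimitiveRoot ζ n := Complex.isPrimitiveRoot_exp n hnpos.ne'
  have hζn : ζ ^ n = 1 := hζ.pow_eq_one
  set Z : ZMod n → ℂ := fun j => ζ ^ j.val with hZdef
  set AP : ZMod n → (V →ₗ[ℂ] V) := fun l => A ^ l.val with hAPdef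
  have Zadd : ∀ a b : ZMod n, Z (a + b) = Z a * Z b := by
    intro a b
    simp only [hZdef]
    rw [← pow_add]
    exact pow_eq_of_modEq hζn (by rw [ZMod.val_add]; exact Nat.mod_modEq _ n)
  have Zmul : ∀ a b : ZMod n, Z (a * b) = (Z a) ^ b.val := by
    intro a b
    simp only [hZdef]
    rw [← pow_mul]
    exact pow_eq_of_modEq hζn (by rw [ZMod.val_mul]; exact Nat.mod_modEq _ n)
  have Z0 : Z 0 = 1 := by simp [hZdef]
  have Zinv : ∀ a : ZMod n, Z (-a) * Z a = 1 := by
    intro a; rw [← Zadd, neg_add_cancel, Z0]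
  have APadd : ∀ a b : ZMod n, AP (a + b) = AP a * AP b := by
    intro a b
    simp only [hAPdef]
    rw [← pow_add]
    exact pow_eq_of_modEq hA (by rw [ZMod.val_add]; exact Nat.mod_modEq _ n)
  have AP0 : AP 0 = 1 := by simp [hAPdef]
  -- sum of Z over a "row"
  have sumZ : ∀ c : ZMod n, ∑ j : ZMod n, Z (j * c) = if c = 0 then (n : ℂ) else 0 := by
    intro c
    by_cases hc : c = 0
    · simp [hc, Z0, Finset.card_univ, ZMod.card]
    · rw [if_neg hc]
      have hrw : ∀ j : ZMod n, Z (j * c) = (Z c) ^ j.val := by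
        intro j; rw [mul_comm]; exact Zmul c j
      simp only [hrw]
      have : ∑ j : ZMod n, (Z c) ^ j.val = ∑ i ∈ Finset.range n, (Z c) ^ i := by
        refine Finset.sum_nbij' (fun j => j.val) (fun i => (i : ZMod n)) ?_ ?_ ?_ ?_ ?_
        · intro a _; exact Finset.mem_range.mpr (ZMod.val_lt a)
        · intro a _; exact Finset.mem_univ _
        · intro a _; exact ZMod.natCast_rightInverse a
        · intro a ha; exact ZMod.val_cast_of_lt (Finset.mem_range.mp ha)
        · intro a _; rfl
      rw [this]
      have hZc1 : Z c ≠ 1 := by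
        have hvpos : 0 < c.val := Nat.pos_of_ne_zero (fun h => hc (by rwa [ZMod.val_eq_zero] at h))
        exact hζ.pow_ne_one_of_pos_of_lt hvpos.ne' (ZMod.val_lt c)
      rw [geom_sum_eq hZc1]
      have : (Z c) ^ n = 1 := by
        rw [hZdef]; rw [← pow_mul, mul_comm, pow_mul, hζn, one_pow]
      rw [this]; simp
  set P : ZMod n → (V →ₗ[ℂ] V) :=
    fun j => (n : ℂ)⁻¹ • ∑ l : ZMod n, Z (-(j * l)) • AP l with hPdef
  have hnne : (n : ℂ) ≠ 0 := Nat.cast_ne_zero.mpr hnpos.ne'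
  have hsumP : ∑ j : ZMod n, P j = 1 := by
    simp only [hPdef]
    rw [← Finset.smul_sum, Finset.sum_comm]
    have : ∀ l : ZMod n, ∑ j : ZMod n, Z (-(j * l)) • AP l
        = (if l = 0 then (n:ℂ) else 0) • AP l := by
      intro l
      rw [← Finset.sum_smul]
      congr 1
      have : ∀ j : ZMod n, -(j * l) = j * (-l) := by intro j; ring
      simp only [this]
      rw [sumZ (-l)]
      simp [neg_eq_zero]
    simp only [this]
    rw [Finset.sum_eq_single 0]
    · simp [AP0, smul_smul, inv_mul_cancel₀ hnne]
    · intro b _ hb; simp [hb]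
    · intro h; exact absurd (Finset.mem_univ 0) h
  have hAPP : ∀ (l j : ZMod n), AP l * P j = Z (j * l) • P j := by
    intro l j
    have h1 : AP l * P j = (n:ℂ)⁻¹ • ∑ t : ZMod n, Z (-(j * t)) • AP (l + t) := by
      simp only [hPdef]
      rw [mul_smul_comm, Finset.mul_sum]
      congr 1
      refine Finset.sum_congr rfl fun t _ => ?_
      rw [mul_smul_comm, ← APadd]
    rw [h1]
    have h2 : ∑ t : ZMod n, Z (-(j * t)) • AP (l + t)
        = ∑ y : ZMod n, (Z (j * l) * Z (-(j * y))) • AP y := by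
      refine Fintype.sum_equiv (Equiv.addLeft l) _ _ fun t => ?_
      simp only [Equiv.coe_addLeft]
      rw [← Zadd]
      congr 2
      ring
    rw [h2]
    simp only [mul_smul]
    rw [← Finset.smul_sum, smul_comm]
  have hAPdecomp : ∀ l : ZMod n, AP l = ∑ j : ZMod n, Z (j * l) • P j := by
    intro l
    calc AP l = AP l * 1 := (mul_one _).symm
    _ = AP l * ∑ j : ZMod n, P j := by rw [hsumP]
    _ = ∑ j : ZMod n, AP l * P j := by rw [Finset.mul_sum]
    _ = ∑ j : ZMod n, Z (j * l) • P j := by simp only [hAPP]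
  have hPP : ∀ j : ZMod n, P j * P j = P j := by
    intro j
    rw [show P j * P j = ((n:ℂ)⁻¹ • ∑ l : ZMod n, Z (-(j * l)) • AP l) * P j from rfl]
    rw [smul_mul_assoc, Finset.sum_mul]
    have : ∀ l : ZMod n, (Z (-(j*l)) • AP l) * P j = P j := by
      intro l
      rw [smul_mul_assoc, hAPP, smul_smul, Zinv, one_smul]
    simp only [this]
    rw [Finset.sum_const, Finset.card_univ, ZMod.card, smul_comm, ← Nat.cast_smul_eq_nsmul (R := ℂ), smul_smul]
    rw [mul_inv_cancel₀ hnne, one_smul]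
  have htrP : ∀ j : ZMod n, ∃ q : ℕ, trace ℂ V (P j) = (q : ℂ) := by
    intro j
    have hproj : LinearMap.IsProj (LinearMap.range (P j)) (P j) := by
      refine ⟨fun x => LinearMap.mem_range_self _ x, ?_⟩
      rintro x ⟨y, rfl⟩
      exact congrArg (fun f => f y) (hPP j)
    exact ⟨finrank ℂ (LinearMap.range (P j)), hproj.trace⟩
  have key : ∀ a : ℕ, trace ℂ V (A ^ a) = ∑ j : ZMod n, Z (j * (a : ZMod n)) * trace ℂ V (P j) := by
    intro a
    have h1 : A ^ a = AP ((a : ZMod n)) := by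
      simp only [hAPdef]
      exact pow_eq_of_modEq hA (by rw [ZMod.val_natCast]; exact (Nat.mod_modEq a n).symm)
    rw [h1, hAPdecomp, map_sum]
    simp only [map_smul, smul_eq_mul]
  have hconjζ : (starRingEnd ℂ) ζ = ζ⁻¹ := by
    rw [hζdef, ← Complex.exp_conj, ← Complex.exp_neg]
    congr 1
    simp only [map_div₀, map_mul, Complex.conj_I, Complex.conj_ofReal, map_ofNat, map_natCast]
    ring
  have conjZ : ∀ x : ZMod n, (starRingEnd ℂ) (Z x) = Z (-x) := by
    intro x
    have h1 : Z (-x) = (Z x)⁻¹ := eq_inv_of_mul_eq_one_left (Zinv x)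
    rw [h1, hZdef]
    simp only [map_pow, hconjζ, inv_pow]
  have hginv : g⁻¹ = g ^ (n - 1) := by
    have hg : g ^ n = 1 := pow_card_eq_one
    have h1 : g ^ (n - 1) * g = 1 := by
      rw [← pow_succ, Nat.sub_add_cancel hnpos, hg]
    exact (eq_inv_of_mul_eq_one_left h1).symm
  have hcast : ((n - 1 : ℕ) : ZMod n) = -1 := by
    have h1 : ((n - 1 : ℕ) : ZMod n) + 1 = ((n - 1 + 1 : ℕ) : ZMod n) := by push_cast; ring
    rw [Nat.sub_add_cancel hnpos] at h1
    rw [ZMod.natCast_self] at h1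
    linear_combination h1
  have hchar : ∀ x : G, V.character x = trace ℂ V (V.ρ x) := fun _ => rfl
  rw [hchar, hchar, hginv, map_pow]
  rw [show V.ρ g ^ (n-1) = A ^ (n-1) from rfl, key (n-1)]
  have hA1 : V.ρ g = A ^ 1 := by rw [pow_one]
  rw [hA1, key 1, map_sum]
  refine Finset.sum_congr rfl fun j _ => ?_
  rw [map_mul]
  obtain ⟨q, hq⟩ := htrP j
  rw [hq, map_natCast, conjZ]
  congr 2
  rw [hcast]
  push_cast
  ring

end P2aux

section SW
variable {M : Type} [AddCommGroup M] [Module ℂ M] [FiniteDimensional ℂ M]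



lemma sandwich (E : M →ₗ[ℂ] M) (hE : E * E = E) (htr : trace ℂ M E = 1) (S : M →ₗ[ℂ] M) :
    E * S * E = (trace ℂ M (S * E)) • E := by
  have hproj : LinearMap.IsProj (LinearMap.range E) E := by
    refine ⟨fun x => LinearMap.mem_range_self _ x, ?_⟩
    rintro x ⟨y, rfl⟩
    exact congrArg (fun f => f y) hE
  have hW : finrank ℂ (LinearMap.range E) = 1 := by
    have h1 := hproj.trace
    rw [htr] at h1
    exact_mod_cast h1.symm
  obtain ⟨v0, hv0ne, hv0⟩ := finrank_eq_one_iff'.mp hW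
  -- E acts as identity on range E
  have hEfix : ∀ u : LinearMap.range E, E (u : M) = (u : M) := by
    rintro ⟨u, y, rfl⟩
    exact congrArg (fun f => f y) hE
  obtain ⟨c, hc⟩ := hv0 ⟨E (S (v0 : M)), LinearMap.mem_range_self _ _⟩
  have key : ∀ x : M, E (S (E x)) = c • E x := by
    intro x
    obtain ⟨a, ha⟩ := hv0 ⟨E x, LinearMap.mem_range_self _ _⟩
    have haM : E x = a • (v0 : M) := by
      have := congrArg (Subtype.val) ha
      simpa using this.symm
    have hcM : E (S (v0 : M)) = c • (v0 : M) := by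
      have := congrArg (Subtype.val) hc
      simpa using this.symm
    rw [haM, map_smul, map_smul, hcM]
    rw [smul_comm]
  have heq : E * S * E = c • E := by
    ext x
    simpa using key x
  have htrc : trace ℂ M (S * E) = c := by
    have h1 : trace ℂ M (E * S * E) = trace ℂ M (S * E) := by
      rw [trace_mul_comm, show E * (E * S) = E * E * S from (mul_assoc _ _ _).symm, hE, trace_mul_comm]
    rw [← h1, heq, map_smul, htr, smul_eq_mul, mul_one]
  rw [htrc, heq]

end SW

section RO
variable {G : Type} [Group G] [Fintype G]



section RowOrth

-- equivariant averaging map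
lemma psi_mem_invariants (X Y : FDRep ℂ G) (ψ : Y →ₗ[ℂ] X) :
    (∑ x : G, X.ρ x ∘ₗ ψ ∘ₗ Y.ρ x⁻¹) ∈ (Representation.linHom Y.ρ X.ρ).invariants := by
  intro g
  rw [Representation.linHom_apply]
  ext v
  simp only [LinearMap.coe_comp, Function.comp_apply, LinearMap.coe_sum, Finset.sum_apply,
    map_sum]
  refine Fintype.sum_equiv (Equiv.mulLeft g) _ _ fun x => ?_
  simp only [Equiv.coe_mulLeft, LinearMap.coe_comp, Function.comp_apply]
  have h1 : Y.ρ (g * x)⁻¹ v = Y.ρ x⁻¹ (Y.ρ g⁻¹ v) := by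
    rw [mul_inv_rev, map_mul]; rfl
  have h2 : X.ρ (g * x) = X.ρ g ∘ₗ X.ρ x := by rw [map_mul]; rfl
  rw [h1, h2]; rfl

lemma psi_eq_zero_of_ne (X Y : FDRep ℂ G) [Simple X] [Simple Y]
    (hne : X.character ≠ Y.character) (ψ : Y →ₗ[ℂ] X) :
    (∑ x : G, X.ρ x ∘ₗ ψ ∘ₗ Y.ρ x⁻¹) = 0 := by
  have hnoiso : ¬ Nonempty (Y ≅ X) := by
    rintro ⟨e⟩
    exact hne (FDRep.char_iso e).symm
  have hfr : finrank ℂ ((Representation.linHom Y.ρ X.ρ).invariants) = 0 := by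
    rw [(Representation.linHom.invariantsEquivFDRepHom (k := ℂ) (G := G) Y X).finrank_eq,
      FDRep.finrank_hom_simple_simple, if_neg hnoiso]
  have hbot : (Representation.linHom Y.ρ X.ρ).invariants = ⊥ :=
    Submodule.finrank_eq_zero.mp hfr
  have := psi_mem_invariants X Y ψ
  rw [hbot] at this
  exact this

lemma id_ne_zero_lm (X : FDRep ℂ G) [Simple X] : (LinearMap.id : X →ₗ[ℂ] X) ≠ 0 := by
  intro h
  apply CategoryTheory.id_nonzero X
  have : (𝟙 X : X ⟶ X).hom = ((0 : X ⟶ X)).hom := by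
    rw [Action.id_hom, Action.zero_hom]
    ext1
    exact h
  exact Action.hom_ext _ _ this

lemma finrank_pos_fdrep (X : FDRep ℂ G) [Simple X] : 0 < finrank ℂ X := by
  have : Nontrivial X := by
    by_contra hn
    have hsub : Subsingleton X := not_nontrivial_iff_subsingleton.mp hn
    exact id_ne_zero_lm X (LinearMap.ext fun v => Subsingleton.elim _ _)
  exact finrank_pos

lemma psi_eq_smul_id (X : FDRep ℂ G) [Simple X] (ψ : X →ₗ[ℂ] X) :
    (∑ x : G, X.ρ x ∘ₗ ψ ∘ₗ X.ρ x⁻¹) =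
      (((Fintype.card G : ℂ) / (finrank ℂ X : ℂ)) * trace ℂ X ψ) • LinearMap.id := by
  have hfr : finrank ℂ ((Representation.linHom X.ρ X.ρ).invariants) = 1 := by
    rw [(Representation.linHom.invariantsEquivFDRepHom (k := ℂ) (G := G) X X).finrank_eq,
      FDRep.finrank_hom_simple_simple, if_pos ⟨Iso.refl X⟩]
  have hidmem : (LinearMap.id : X →ₗ[ℂ] X) ∈ (Representation.linHom X.ρ X.ρ).invariants := by
    intro g
    rw [Representation.linHom_apply]
    ext v
    simp only [LinearMap.coe_comp, Function.comp_apply, LinearMap.id_coe, id_eq]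
    have : X.ρ g (X.ρ g⁻¹ v) = X.ρ (g * g⁻¹) v := by rw [map_mul]; rfl
    rw [this, mul_inv_cancel, map_one]; rfl
  have hidne : (⟨LinearMap.id, hidmem⟩ :
      (Representation.linHom X.ρ X.ρ).invariants) ≠ 0 := by
    intro h
    exact id_ne_zero_lm X (congrArg Subtype.val h)
  obtain ⟨c, hc⟩ := (finrank_eq_one_iff_of_nonzero' _ hidne).mp hfr
    ⟨_, psi_mem_invariants X X ψ⟩
  have hc' : (∑ x : G, X.ρ x ∘ₗ ψ ∘ₗ X.ρ x⁻¹) = c • LinearMap.id := by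
    have := congrArg Subtype.val hc
    simpa using this.symm
  -- compute c via traces
  have htr1 : trace ℂ X (∑ x : G, X.ρ x ∘ₗ ψ ∘ₗ X.ρ x⁻¹)
      = (Fintype.card G : ℂ) * trace ℂ X ψ := by
    rw [map_sum]
    have : ∀ x : G, trace ℂ X (X.ρ x ∘ₗ ψ ∘ₗ X.ρ x⁻¹) = trace ℂ X ψ := by
      intro x
      have h1 : X.ρ x ∘ₗ ψ ∘ₗ X.ρ x⁻¹ = (X.ρ x * ψ) * X.ρ x⁻¹ := rfl
      rw [h1, trace_mul_comm]
      have h2 : X.ρ x⁻¹ * (X.ρ x * ψ) = (X.ρ x⁻¹ * X.ρ x) * ψ := (mul_assoc _ _ _).symm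
      rw [h2, ← map_mul, inv_mul_cancel, map_one, one_mul]
    simp only [this, Finset.sum_const, Finset.card_univ, nsmul_eq_mul]
  have htr2 : trace ℂ X ((c • LinearMap.id : X →ₗ[ℂ] X)) = c * (finrank ℂ X : ℂ) := by
    rw [map_smul, trace_id, smul_eq_mul]
  have hd : (finrank ℂ X : ℂ) ≠ 0 :=
    Nat.cast_ne_zero.mpr (finrank_pos_fdrep X).ne'
  have hceq : c = (Fintype.card G : ℂ) / (finrank ℂ X : ℂ) * trace ℂ X ψ := by
    have hkey : c * (finrank ℂ X : ℂ) = (Fintype.card G : ℂ) * trace ℂ X ψ := by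
      rw [← htr2, ← hc', htr1]
    field_simp
    linear_combination hkey
  rw [hc', hceq]


lemma trace_lcomp_llcomp {M N : Type} [AddCommGroup M] [Module ℂ M] [FiniteDimensional ℂ M]
    [AddCommGroup N] [Module ℂ N] [FiniteDimensional ℂ N]
    (A : M →ₗ[ℂ] M) (B : N →ₗ[ℂ] N) :
    trace ℂ (N →ₗ[ℂ] M) ((llcomp ℂ N M M A) ∘ₗ (lcomp ℂ M B)) =
      trace ℂ M A * trace ℂ N B := by
  have he : (llcomp ℂ N M M A) ∘ₗ (lcomp ℂ M B)
      = (dualTensorHomEquiv ℂ N M).conj (TensorProduct.map (Module.Dual.transpose B) A) := by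
    rw [LinearEquiv.conj_apply]
    rw [LinearEquiv.eq_comp_toLinearMap_symm]
    apply TensorProduct.ext'
    intro f m
    ext n
    simp [dualTensorHomEquiv, Module.Dual.transpose_apply]
  rw [he, trace_conj', trace_tensorProduct', trace_transpose', mul_comm]

lemma trace_smulRight' {M : Type} [AddCommGroup M] [Module ℂ M] [FiniteDimensional ℂ M]
    (ℓ : Module.Dual ℂ M) (v : M) :
    trace ℂ M (ℓ.smulRight v) = ℓ v := by
  have h : ℓ.smulRight v = dualTensorHom ℂ M M (ℓ ⊗ₜ v) := by
    ext m; simp [dualTensorHom_apply]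
  rw [h, trace_eq_contract_apply, contractLeft_apply]

lemma row_orth_sum (X Y : FDRep ℂ G) (EX : X →ₗ[ℂ] X) (EY : Y →ₗ[ℂ] Y) :
    ∑ x : G, trace ℂ X (X.ρ x * EX) * trace ℂ Y (Y.ρ x⁻¹ * EY)
      = trace ℂ (Y →ₗ[ℂ] X)
        (∑ x : G, (llcomp ℂ Y X X (X.ρ x * EX)) ∘ₗ (lcomp ℂ X (Y.ρ x⁻¹ * EY))) := by
  rw [map_sum]
  exact Finset.sum_congr rfl fun x _ => (trace_lcomp_llcomp _ _).symm

lemma row_orth_ne (X Y : FDRep ℂ G) [Simple X] [Simple Y]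
    (hne : X.character ≠ Y.character) (EX : X →ₗ[ℂ] X) (EY : Y →ₗ[ℂ] Y) :
    ∑ x : G, trace ℂ X (X.ρ x * EX) * trace ℂ Y (Y.ρ x⁻¹ * EY) = 0 := by
  rw [row_orth_sum]
  have hzero : (∑ x : G, (llcomp ℂ Y X X (X.ρ x * EX)) ∘ₗ (lcomp ℂ X (Y.ρ x⁻¹ * EY))) = 0 := by
    ext φ v
    simp only [LinearMap.coe_sum, Finset.sum_apply, LinearMap.coe_comp, Function.comp_apply,
      llcomp_apply, lcomp_apply, Module.End.mul_apply, LinearMap.zero_apply]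
    have h0 := psi_eq_zero_of_ne X Y hne (EX ∘ₗ φ)
    have := congrArg (fun (f : Y →ₗ[ℂ] X) => f (EY v)) h0
    simpa using this
  rw [hzero, map_zero]

lemma row_orth_eq (X : FDRep ℂ G) [Simple X] (E : X →ₗ[ℂ] X)
    (hEE : E * E = E) (htrE : trace ℂ X E = 1) :
    ∑ x : G, trace ℂ X (X.ρ x * E) * trace ℂ X (X.ρ x⁻¹ * E)
      = (Fintype.card G : ℂ) / (finrank ℂ X : ℂ) := by
  rw [row_orth_sum]
  have hop : (∑ x : G, (llcomp ℂ X X X (X.ρ x * E)) ∘ₗ (lcomp ℂ X (X.ρ x⁻¹ * E)))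
      = ((Fintype.card G : ℂ) / (finrank ℂ X : ℂ)) •
        (((trace ℂ X) ∘ₗ (llcomp ℂ X X X E)).smulRight E) := by
    ext φ v
    simp only [LinearMap.coe_sum, Finset.sum_apply, LinearMap.coe_comp, Function.comp_apply,
      llcomp_apply, lcomp_apply, Module.End.mul_apply, LinearMap.smul_apply,
      LinearMap.smulRight_apply]
    have h0 := psi_eq_smul_id X (E ∘ₗ φ)
    have := congrArg (fun (f : X →ₗ[ℂ] X) => f (E v)) h0
    simp only [LinearMap.coe_sum, Finset.sum_apply, LinearMap.coe_comp, Function.comp_apply,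
      LinearMap.smul_apply, LinearMap.id_coe, id_eq] at this
    rw [this, smul_smul]
    rfl
  rw [hop, map_smul, trace_smulRight']
  have : (trace ℂ X ∘ₗ llcomp ℂ X X X E) E = trace ℂ X (E * E) := rfl
  rw [this, hEE, htrE]
  simp

end RowOrth

end RO

namespace GelfandPairData
open scoped Classical
variable {G : Type} [Group G] [Fintype G]
variable (D : GelfandPairData G)

noncomputable def W (i : Fin (D.s + 1)) : FDRep ℂ G := (D.irr i).choose

lemma W_simple (i : Fin (D.s + 1)) : Simple (D.W i) := (D.irr i).choose_spec.1

lemma char_W (i : Fin (D.s + 1)) : D.χ i = (D.W i).character := (D.irr i).choose_spec.2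

noncomputable def KF : Finset G := Set.toFinset (D.K : Set G)

lemma mem_KF {k : G} : k ∈ D.KF ↔ k ∈ D.K := by simp [KF]

lemma card_KF : (D.KF.card : ℂ) = (Nat.card D.K : ℂ) := by
  congr 1
  rw [KF, Set.toFinset_card, Nat.card_eq_fintype_card]
  exact (Fintype.card_congr (Equiv.setCongr rfl)).symm

lemma Ncard_ne : (Nat.card D.K : ℂ) ≠ 0 := by
  have : 0 < Nat.card D.K := Nat.card_pos
  exact_mod_cast this.ne'

noncomputable def EE (i : Fin (D.s + 1)) : (D.W i) →ₗ[ℂ] (D.W i) :=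
  (Nat.card D.K : ℂ)⁻¹ • ∑ k ∈ D.KF, (D.W i).ρ k

/-- left K-invariance of sums over KF -/
lemma sum_KF_mul_left {M : Type} [AddCommMonoid M] (f : G → M) {k : G} (hk : k ∈ D.K) :
    ∑ k' ∈ D.KF, f (k * k') = ∑ k' ∈ D.KF, f k' := by
  refine Finset.sum_nbij' (fun k' => k * k') (fun k' => k⁻¹ * k') ?_ ?_ ?_ ?_ ?_
  · intro a ha; rw [mem_KF] at *; exact D.K.mul_mem hk ha
  · intro a ha; rw [mem_KF] at *; exact D.K.mul_mem (D.K.inv_mem hk) ha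
  · intro a _; group
  · intro a _; group
  · intro a _; rfl

lemma sum_KF_mul_right {M : Type} [AddCommMonoid M] (f : G → M) {k : G} (hk : k ∈ D.K) :
    ∑ k' ∈ D.KF, f (k' * k) = ∑ k' ∈ D.KF, f k' := by
  refine Finset.sum_nbij' (fun k' => k' * k) (fun k' => k' * k⁻¹) ?_ ?_ ?_ ?_ ?_
  · intro a ha; rw [mem_KF] at *; exact D.K.mul_mem ha hk
  · intro a ha; rw [mem_KF] at *; exact D.K.mul_mem ha (D.K.inv_mem hk)
  · intro a _; group
  · intro a _; group
  · intro a _; rfl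

lemma sum_KF_inv {M : Type} [AddCommMonoid M] (f : G → M) :
    ∑ k ∈ D.KF, f k⁻¹ = ∑ k ∈ D.KF, f k := by
  refine Finset.sum_nbij' (fun k => k⁻¹) (fun k => k⁻¹) ?_ ?_ ?_ ?_ ?_
  · intro a ha; rw [mem_KF] at *; exact D.K.inv_mem ha
  · intro a ha; rw [mem_KF] at *; exact D.K.inv_mem ha
  · intro a _; group
  · intro a _; group
  · intro a _; rfl

lemma rho_mul_EE (i : Fin (D.s + 1)) {k : G} (hk : k ∈ D.K) :
    (D.W i).ρ k * D.EE i = D.EE i := by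
  rw [EE, mul_smul_comm, Finset.mul_sum]
  congr 1
  have : ∀ k' ∈ D.KF, (D.W i).ρ k * (D.W i).ρ k' = (D.W i).ρ (k * k') := by
    intro k' _; rw [map_mul]
  rw [Finset.sum_congr rfl this]
  exact D.sum_KF_mul_left (fun y => (D.W i).ρ y) hk

lemma EE_mul_rho (i : Fin (D.s + 1)) {k : G} (hk : k ∈ D.K) :
    D.EE i * (D.W i).ρ k = D.EE i := by
  rw [EE, smul_mul_assoc, Finset.sum_mul]
  congr 1
  have : ∀ k' ∈ D.KF, (D.W i).ρ k' * (D.W i).ρ k = (D.W i).ρ (k' * k) := by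
    intro k' _; rw [map_mul]
  rw [Finset.sum_congr rfl this]
  exact D.sum_KF_mul_right (fun y => (D.W i).ρ y) hk

lemma EE_idem (i : Fin (D.s + 1)) : D.EE i * D.EE i = D.EE i := by
  nth_rewrite 1 [EE]
  rw [smul_mul_assoc, Finset.sum_mul]
  have : ∀ k ∈ D.KF, (D.W i).ρ k * D.EE i = D.EE i := fun k hk =>
    D.rho_mul_EE i (D.mem_KF.mp hk)
  rw [Finset.sum_congr rfl this, Finset.sum_const, ← Nat.cast_smul_eq_nsmul ℂ, smul_smul,
    D.card_KF, inv_mul_cancel₀ D.Ncard_ne, one_smul]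

lemma trace_EE (i : Fin (D.s + 1)) : trace ℂ (D.W i) (D.EE i) = 1 := by
  have h0 := D.mult_one i
  have hfin : (∑ᶠ k ∈ (D.K : Set G), D.χ i k) = ∑ k ∈ D.KF, D.χ i k := by
    have h := finsum_mem_coe_finset (s := D.KF) (f := D.χ i)
    rw [KF, Set.coe_toFinset] at h
    rw [KF]
    exact h
  rw [hfin] at h0
  rw [EE, map_smul, map_sum]
  have : ∀ k ∈ D.KF, trace ℂ (D.W i) ((D.W i).ρ k) = D.χ i k := by
    intro k _
    rw [D.char_W i]; rfl
  rw [Finset.sum_congr rfl this]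
  rw [smul_eq_mul]
  exact h0

noncomputable def om (i : Fin (D.s + 1)) (x : G) : ℂ :=
  trace ℂ (D.W i) ((D.W i).ρ x * D.EE i)

lemma om_eq_sum (i : Fin (D.s + 1)) (x : G) :
    D.om i x = (Nat.card D.K : ℂ)⁻¹ * ∑ k ∈ D.KF, D.χ i (x * k) := by
  rw [om, EE, mul_smul_comm, Finset.mul_sum, map_smul, map_sum]
  congr 1
  refine Finset.sum_congr rfl fun k _ => ?_
  rw [← map_mul, D.char_W i]
  rfl

lemma om_bi (i : Fin (D.s + 1)) {k1 k2 : G} (h1 : k1 ∈ D.K) (h2 : k2 ∈ D.K) (x : G) :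
    D.om i (k1 * x * k2) = D.om i x := by
  rw [om, om]
  have : (D.W i).ρ (k1 * x * k2) = (D.W i).ρ k1 * (D.W i).ρ x * (D.W i).ρ k2 := by
    rw [← map_mul, ← map_mul]
  rw [this, mul_assoc, D.rho_mul_EE i h2, mul_assoc, trace_mul_comm, mul_assoc,
    D.EE_mul_rho i h1]

lemma om_conj (i : Fin (D.s + 1)) (x : G) :
    (starRingEnd ℂ) (D.om i x) = D.om i x⁻¹ := by
  rw [om_eq_sum, om_eq_sum, map_mul]
  congr 1
  · rw [map_inv₀, map_natCast]
  · rw [map_sum]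
    rw [← D.sum_KF_inv (fun k => D.χ i (x⁻¹ * k))]
    refine Finset.sum_congr rfl fun k _ => ?_
    rw [D.char_W i]
    rw [FDRep.char_mul_comm (D.W i) k⁻¹ x⁻¹]
    rw [show k⁻¹ * x⁻¹ = (x * k)⁻¹ by group]
    exact (char_inv_eq_conj (D.W i) (x * k)).symm

lemma ω_eq_om (i : Fin (D.s + 1)) (x : G) : D.ω i x = D.om i x⁻¹ := by
  rw [ω, om_eq_sum]
  congr 1
  have h := finsum_mem_coe_finset (s := D.KF) (f := fun k => D.χ i (x⁻¹ * k))
  rw [KF, Set.coe_toFinset] at h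
  rw [KF]
  exact h

lemma sandwich_om (i : Fin (D.s + 1)) (a : G) :
    D.EE i * (D.W i).ρ a * D.EE i = (D.om i a) • D.EE i :=
  sandwich (D.EE i) (D.EE_idem i) (D.trace_EE i) ((D.W i).ρ a)

noncomputable def DCF (t : Fin (D.s + 1)) : Finset G := Set.toFinset (D.DC t)

lemma mem_DCF {t : Fin (D.s + 1)} {x : G} : x ∈ D.DCF t ↔ x ∈ D.DC t := Set.mem_toFinset

lemma g_mem_DC (t : Fin (D.s + 1)) : D.g t ∈ D.DC t :=
  ⟨1, D.K.one_mem, 1, D.K.one_mem, by group⟩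

lemma DCF_nonempty (t : Fin (D.s + 1)) : (D.DCF t).Nonempty :=
  ⟨D.g t, D.mem_DCF.mpr (D.g_mem_DC t)⟩

lemma DCFcard_ne (t : Fin (D.s + 1)) : ((D.DCF t).card : ℂ) ≠ 0 := by
  have := Finset.card_pos.mpr (D.DCF_nonempty t)
  exact_mod_cast this.ne'

lemma om_const_on_DC (i t : Fin (D.s + 1)) {x : G} (hx : x ∈ D.DC t) :
    D.om i x = D.om i (D.g t) := by
  obtain ⟨k1, h1, k2, h2, rfl⟩ := hx
  exact D.om_bi i h1 h2 _

lemma om_inv_const_on_DC (i t : Fin (D.s + 1)) {x : G} (hx : x ∈ D.DC t) :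
    D.om i x⁻¹ = D.om i (D.g t)⁻¹ := by
  obtain ⟨k1, h1, k2, h2, rfl⟩ := hx
  rw [show (k1 * D.g t * k2)⁻¹ = k2⁻¹ * (D.g t)⁻¹ * k1⁻¹ by group]
  exact D.om_bi i (D.K.inv_mem h2) (D.K.inv_mem h1) _

/-- double coset counting: sums over K × K collapse to fiber-count times sum over the coset -/
lemma sum_KK {M : Type} [AddCommMonoid M] (t : Fin (D.s + 1)) (f : G → M) :
    ∑ p ∈ D.KF ×ˢ D.KF, f (p.1 * D.g t * p.2)
      = ∑ y ∈ D.DCF t, (((D.KF ×ˢ D.KF).filter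
          (fun p => p.1 * D.g t * p.2 = y)).card) • f y := by
  rw [Finset.sum_comp f (fun p : G × G => p.1 * D.g t * p.2)]
  have himg : (D.KF ×ˢ D.KF).image (fun p : G × G => p.1 * D.g t * p.2) = D.DCF t := by
    ext y
    simp only [Finset.mem_image, Finset.mem_product, mem_DCF, mem_KF]
    constructor
    · rintro ⟨⟨a, b⟩, ⟨ha, hb⟩, rfl⟩
      exact ⟨a, ha, b, hb, rfl⟩
    · rintro ⟨a, ha, b, hb, rfl⟩
      exact ⟨⟨a, b⟩, ⟨ha, hb⟩, rfl⟩
  rw [himg]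

lemma fiber_const (t : Fin (D.s + 1)) {y : G} (hy : y ∈ D.DC t) :
    ((D.KF ×ˢ D.KF).filter (fun p => p.1 * D.g t * p.2 = y)).card
      = ((D.KF ×ˢ D.KF).filter (fun p => p.1 * D.g t * p.2 = D.g t)).card := by
  obtain ⟨a, ha, b, hb, rfl⟩ := hy
  refine Finset.card_nbij' (fun p : G × G => (a⁻¹ * p.1, p.2 * b⁻¹))
    (fun p : G × G => (a * p.1, p.2 * b)) ?_ ?_ ?_ ?_
  · rintro ⟨p1, p2⟩ (hp : (p1, p2) ∈ (↑((D.KF ×ˢ D.KF).filter (fun p : G × G => p.1 * D.g t * p.2 = a * D.g t * b)) : Set (G × G)))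
    simp only [Finset.mem_coe, Finset.mem_filter, Finset.mem_product, mem_KF] at hp ⊢
    obtain ⟨⟨hp1, hp2⟩, hprod⟩ := hp
    refine ⟨⟨D.K.mul_mem (D.K.inv_mem ha) hp1, D.K.mul_mem hp2 (D.K.inv_mem hb)⟩, ?_⟩
    have : a⁻¹ * p1 * D.g t * (p2 * b⁻¹) = a⁻¹ * (p1 * D.g t * p2) * b⁻¹ := by group
    rw [this, hprod]
    group
  · rintro ⟨p1, p2⟩ (hp : (p1, p2) ∈ (↑((D.KF ×ˢ D.KF).filter (fun p : G × G => p.1 * D.g t * p.2 = D.g t)) : Set (G × G)))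
    simp only [Finset.mem_coe, Finset.mem_filter, Finset.mem_product, mem_KF] at hp ⊢
    obtain ⟨⟨hp1, hp2⟩, hprod⟩ := hp
    refine ⟨⟨D.K.mul_mem ha hp1, D.K.mul_mem hp2 hb⟩, ?_⟩
    have : a * p1 * D.g t * (p2 * b) = a * (p1 * D.g t * p2) * b := by group
    rw [this, hprod]
  · rintro ⟨p1, p2⟩ _
    simp only [Prod.mk.injEq]
    constructor <;> group
  · rintro ⟨p1, p2⟩ _
    simp only [Prod.mk.injEq]
    constructor <;> group

lemma sum_KF_rho (i : Fin (D.s + 1)) :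
    ∑ k ∈ D.KF, (D.W i).ρ k = (Nat.card D.K : ℂ) • D.EE i := by
  rw [EE, smul_smul, mul_inv_cancel₀ D.Ncard_ne, one_smul]

lemma sum_DCF_rho (i t : Fin (D.s + 1)) :
    ∑ y ∈ D.DCF t, (D.W i).ρ y
      = ((((D.DCF t).card : ℂ)) * D.om i (D.g t)) • D.EE i := by
  classical
  set c : ℕ := ((D.KF ×ˢ D.KF).filter (fun p => p.1 * D.g t * p.2 = D.g t)).card with hc
  have hcpos : 0 < c := by
    rw [hc]
    refine Finset.card_pos.mpr ⟨(1, 1), ?_⟩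
    simp only [Finset.mem_filter, Finset.mem_product, mem_KF]
    exact ⟨⟨D.K.one_mem, D.K.one_mem⟩, by group⟩
  have h1 : ∑ p ∈ D.KF ×ˢ D.KF, (D.W i).ρ (p.1 * D.g t * p.2)
      = c • ∑ y ∈ D.DCF t, (D.W i).ρ y := by
    rw [D.sum_KK t (fun y => (D.W i).ρ y), Finset.smul_sum]
    refine Finset.sum_congr rfl fun y hy => ?_
    rw [D.fiber_const t (D.mem_DCF.mp hy)]
  have h2 : ∑ p ∈ D.KF ×ˢ D.KF, (D.W i).ρ (p.1 * D.g t * p.2)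
      = (((Nat.card D.K : ℂ))^2 * D.om i (D.g t)) • D.EE i := by
    rw [Finset.sum_product]
    have : ∀ k1 ∈ D.KF, ∑ k2 ∈ D.KF, (D.W i).ρ (k1 * D.g t * k2)
        = (D.W i).ρ k1 * (D.W i).ρ (D.g t) * ((Nat.card D.K : ℂ) • D.EE i) := by
      intro k1 _
      rw [← D.sum_KF_rho i, Finset.mul_sum]
      exact Finset.sum_congr rfl fun k2 _ => by rw [← map_mul, ← map_mul]
    rw [Finset.sum_congr rfl this]
    rw [← Finset.sum_mul, ← Finset.sum_mul, D.sum_KF_rho i]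
    have hsw := D.sandwich_om i (D.g t)
    calc (Nat.card D.K : ℂ) • D.EE i * (D.W i).ρ (D.g t) * ((Nat.card D.K : ℂ) • D.EE i)
        = ((Nat.card D.K : ℂ) * (Nat.card D.K : ℂ)) •
            (D.EE i * (D.W i).ρ (D.g t) * D.EE i) := by
          rw [smul_mul_assoc, smul_mul_assoc, mul_smul_comm, smul_smul]
      _ = ((Nat.card D.K : ℂ)^2 * D.om i (D.g t)) • D.EE i := by
          rw [hsw, smul_smul, sq]
  have hcount : (c : ℂ) * ((D.DCF t).card : ℂ) = ((Nat.card D.K : ℂ))^2 := by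
    have hmaps : ∀ p ∈ D.KF ×ˢ D.KF, p.1 * D.g t * p.2 ∈ D.DCF t := by
      rintro ⟨p1, p2⟩ hp
      simp only [Finset.mem_product, mem_KF] at hp
      exact D.mem_DCF.mpr ⟨p1, hp.1, p2, hp.2, rfl⟩
    have hsumfib := Finset.card_eq_sum_card_fiberwise hmaps
    have hcfib : ∀ y ∈ D.DCF t, ((D.KF ×ˢ D.KF).filter (fun p => p.1 * D.g t * p.2 = y)).card = c :=
      fun y hy => D.fiber_const t (D.mem_DCF.mp hy)
    rw [Finset.sum_congr rfl hcfib, Finset.sum_const, smul_eq_mul, Finset.card_product]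
      at hsumfib
    have hKF : D.KF.card = Nat.card D.K := by exact_mod_cast D.card_KF
    rw [hKF] at hsumfib
    have h := congrArg (fun n : ℕ => (n : ℂ)) hsumfib
    push_cast at h
    rw [sq, h]
    ring
  have hcne : (c : ℂ) ≠ 0 := Nat.cast_ne_zero.mpr hcpos.ne'
  have h3 : (c : ℂ) • ∑ y ∈ D.DCF t, (D.W i).ρ y
      = (((Nat.card D.K : ℂ))^2 * D.om i (D.g t)) • D.EE i := by
    rw [← h2, h1, Nat.cast_smul_eq_nsmul]
  have h4 := congrArg (fun X => (c : ℂ)⁻¹ • X) h3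
  simp only [smul_smul, inv_mul_cancel₀ hcne, one_smul] at h4
  rw [h4]
  congr 1
  rw [← hcount]
  field_simp

lemma sum_DCF_rho_pow (i u : Fin (D.s + 1)) (m : ℕ) (hm : 1 ≤ m) :
    (∑ y ∈ D.DCF u, (D.W i).ρ y) ^ m
      = ((((D.DCF u).card : ℂ)) * D.om i (D.g u)) ^ m • D.EE i := by
  induction m with
  | zero => omega
  | succ m ih =>
    by_cases hm1 : 1 ≤ m
    · rw [pow_succ, ih hm1, pow_succ, D.sum_DCF_rho i u, smul_mul_assoc, mul_smul_comm,
        D.EE_idem i, smul_smul]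
    · have : m = 0 := by omega
      subst this
      rw [pow_one, pow_one, D.sum_DCF_rho i u]

lemma sum_piFinset_prod {R : Type} [Semiring R] (F : G →* R) (s : Finset G) :
    ∀ m : ℕ, ∑ x ∈ Fintype.piFinset (fun _ : Fin m => s), F ((List.ofFn x).prod)
      = (∑ a ∈ s, F a) ^ m := by
  intro m
  induction m with
  | zero =>
    have huniv : Fintype.piFinset (fun _ : Fin 0 => s) = Finset.univ := by
      ext x
      simp [Fintype.mem_piFinset]
    rw [huniv]
    rw [Fintype.sum_unique (fun x : Fin 0 → G => F ((List.ofFn x).prod))]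
    simp [List.ofFn_zero]
  | succ m ih =>
    have hsplit : ∑ x ∈ Fintype.piFinset (fun _ : Fin (m+1) => s), F ((List.ofFn x).prod)
        = ∑ p ∈ s ×ˢ Fintype.piFinset (fun _ : Fin m => s),
            F (p.1 * (List.ofFn p.2).prod) := by
      refine Finset.sum_nbij' (fun x => (x 0, Fin.tail x))
        (fun p => Fin.cons p.1 p.2) ?_ ?_ ?_ ?_ ?_
      · intro x hx
        simp only [Fintype.mem_piFinset] at hx
        simp only [Finset.mem_product, Fintype.mem_piFinset]
        exact ⟨hx 0, fun j => hx j.succ⟩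
      · rintro ⟨a, y⟩ hp
        simp only [Finset.mem_product, Fintype.mem_piFinset] at hp
        simp only [Fintype.mem_piFinset]
        intro j
        refine Fin.cases ?_ ?_ j
        · simpa using hp.1
        · intro j'
          simpa using hp.2 j'
      · intro x _
        exact Fin.cons_self_tail x
      · rintro ⟨a, y⟩ _
        simp [Fin.tail_cons]
      · intro x _
        congr 1
        rw [List.ofFn_succ, List.prod_cons]
        rfl
    rw [hsplit, Finset.sum_product]
    rw [pow_succ']
    rw [← ih, Finset.sum_mul]
    refine Finset.sum_congr rfl fun a _ => ?_
    rw [Finset.mul_sum]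
    exact Finset.sum_congr rfl fun y _ => by rw [map_mul]

lemma tuple_om_sum (i u : Fin (D.s + 1)) (m : ℕ) (hm : 1 ≤ m) :
    ∑ x ∈ Fintype.piFinset (fun _ : Fin m => D.DCF u), D.om i ((List.ofFn x).prod)
      = ((((D.DCF u).card : ℂ)) * D.om i (D.g u)) ^ m := by
  have h1 : ∑ x ∈ Fintype.piFinset (fun _ : Fin m => D.DCF u), D.om i ((List.ofFn x).prod)
      = trace ℂ (D.W i)
        ((∑ x ∈ Fintype.piFinset (fun _ : Fin m => D.DCF u), (D.W i).ρ ((List.ofFn x).prod))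
          * D.EE i) := by
    rw [Finset.sum_mul, map_sum]
    rfl
  rw [h1, sum_piFinset_prod ((D.W i).ρ) (D.DCF u) m, D.sum_DCF_rho_pow i u m hm,
    smul_mul_assoc, D.EE_idem i, map_smul, D.trace_EE i, smul_eq_mul, mul_one]

noncomputable def cIdx (x : G) : Fin (D.s + 1) := (D.coset_cover x).choose

lemma mem_DC_cIdx (x : G) : x ∈ D.DC (D.cIdx x) := (D.coset_cover x).choose_spec

lemma DC_unique {x : G} {t t' : Fin (D.s + 1)} (h : x ∈ D.DC t) (h' : x ∈ D.DC t') : t = t' := by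
  by_contra hne
  exact Set.disjoint_left.mp (D.coset_disjoint t t' hne) h h'

lemma sum_G_eq_sum_DC {M : Type} [AddCommMonoid M] (f : G → M) :
    ∑ x : G, f x = ∑ t : Fin (D.s + 1), ∑ x ∈ D.DCF t, f x := by
  classical
  rw [← Finset.sum_fiberwise Finset.univ D.cIdx f]
  refine Finset.sum_congr rfl fun t _ => ?_
  refine Finset.sum_congr ?_ fun _ _ => rfl
  ext x
  simp only [Finset.mem_filter, Finset.mem_univ, true_and, mem_DCF]
  constructor
  · rintro rfl
    exact D.mem_DC_cIdx x
  · intro hx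
    exact D.DC_unique (D.mem_DC_cIdx x) hx

lemma dcast (i : Fin (D.s + 1)) : (D.d i : ℂ) = (finrank ℂ (D.W i) : ℂ) := by
  rw [← D.dim_eq i, D.char_W i, FDRep.char_one]

lemma d_ne (i : Fin (D.s + 1)) : (D.d i : ℂ) ≠ 0 := by
  rw [D.dcast i]
  haveI := D.W_simple i
  exact_mod_cast (finrank_pos_fdrep (D.W i)).ne'

lemma cardG_ne : (Fintype.card G : ℂ) ≠ 0 := by
  exact_mod_cast Fintype.card_pos.ne'

lemma row_orth_D (i j : Fin (D.s + 1)) :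
    ∑ t : Fin (D.s + 1), ((D.DCF t).card : ℂ) * (D.om i (D.g t) * D.om j ((D.g t)⁻¹))
      = if i = j then (Fintype.card G : ℂ) / (D.d i : ℂ) else 0 := by
  haveI := D.W_simple i
  haveI := D.W_simple j
  have hL : ∑ x : G, D.om i x * D.om j x⁻¹
      = ∑ t : Fin (D.s + 1), ((D.DCF t).card : ℂ)
        * (D.om i (D.g t) * D.om j ((D.g t)⁻¹)) := by
    rw [D.sum_G_eq_sum_DC (fun x => D.om i x * D.om j x⁻¹)]
    refine Finset.sum_congr rfl fun t _ => ?_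
    have : ∀ x ∈ D.DCF t, D.om i x * D.om j x⁻¹
        = D.om i (D.g t) * D.om j ((D.g t)⁻¹) := by
      intro x hx
      rw [D.om_const_on_DC i t (D.mem_DCF.mp hx), D.om_inv_const_on_DC j t (D.mem_DCF.mp hx)]
    rw [Finset.sum_congr rfl this, Finset.sum_const, nsmul_eq_mul]
  rw [← hL]
  by_cases hij : i = j
  · subst hij
    rw [if_pos rfl]
    have := row_orth_eq (D.W i) (D.EE i) (D.EE_idem i) (D.trace_EE i)
    rw [D.dcast i]
    exact this
  · rw [if_neg hij]
    have hne : (D.W i).character ≠ (D.W j).character := by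
      intro h
      exact hij (D.inj (by rw [D.char_W i, D.char_W j, h]))
    exact row_orth_ne (D.W i) (D.W j) hne (D.EE i) (D.EE j)

lemma col_orth (t r : Fin (D.s + 1)) :
    ∑ i : Fin (D.s + 1), ((D.d i : ℂ) / (Fintype.card G : ℂ))
        * (D.om i ((D.g t)⁻¹) * D.om i (D.g r))
      = (if t = r then 1 else 0) / ((D.DCF t).card : ℂ) := by
  classical
  set A : Matrix (Fin (D.s + 1)) (Fin (D.s + 1)) ℂ :=
    Matrix.of (fun i t' => D.om i (D.g t')) with hA
  set B : Matrix (Fin (D.s + 1)) (Fin (D.s + 1)) ℂ :=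
    Matrix.of (fun i t' => D.om i ((D.g t')⁻¹)) with hB
  set Dg : Matrix (Fin (D.s + 1)) (Fin (D.s + 1)) ℂ :=
    Matrix.diagonal (fun t' => ((D.DCF t').card : ℂ)) with hDg
  set Δi : Matrix (Fin (D.s + 1)) (Fin (D.s + 1)) ℂ :=
    Matrix.diagonal (fun i => (D.d i : ℂ) / (Fintype.card G : ℂ)) with hΔi
  have h1 : A * Dg * B.transpose
      = Matrix.diagonal (fun i => (Fintype.card G : ℂ) / (D.d i : ℂ)) := by
    ext i j
    rw [Matrix.mul_apply]
    simp only [hA, hB, hDg, Matrix.mul_diagonal, Matrix.transpose_apply, Matrix.of_apply,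
      Matrix.diagonal_apply]
    rw [← D.row_orth_D i j]
    refine Finset.sum_congr rfl fun t' _ => by ring
  have hAC : A * (Dg * B.transpose * Δi) = 1 := by
    rw [show A * (Dg * B.transpose * Δi) = A * Dg * B.transpose * Δi by
      rw [← Matrix.mul_assoc, ← Matrix.mul_assoc]]
    rw [h1, hΔi, Matrix.diagonal_mul_diagonal]
    have : (fun i => (Fintype.card G : ℂ) / (D.d i : ℂ) * ((D.d i : ℂ) / (Fintype.card G : ℂ)))
        = fun _ => (1 : ℂ) := by
      funext i
      rw [div_mul_div_comm, mul_comm (Fintype.card G : ℂ)]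
      exact div_self (mul_ne_zero (D.d_ne i) cardG_ne)
    rw [this, Matrix.diagonal_one]
  have hCA := mul_eq_one_comm.mp hAC
  have h2 : (Dg * B.transpose * Δi * A) t r = (1 : Matrix (Fin (D.s+1)) (Fin (D.s+1)) ℂ) t r := by
    rw [hCA]
  rw [Matrix.mul_apply] at h2
  simp only [hA, hB, hDg, hΔi, Matrix.mul_diagonal, Matrix.diagonal_mul, Matrix.transpose_apply,
    Matrix.of_apply, Matrix.one_apply] at h2
  have h3 : ((D.DCF t).card : ℂ) * ∑ i : Fin (D.s + 1),
      ((D.d i : ℂ) / (Fintype.card G : ℂ)) * (D.om i ((D.g t)⁻¹) * D.om i (D.g r))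
      = if t = r then 1 else 0 := by
    rw [Finset.mul_sum, ← h2]
    refine Finset.sum_congr rfl fun i _ => by ring
  rw [← h3]
  field_simp [D.DCFcard_ne t]

lemma indicator_DC (r : Fin (D.s + 1)) (y : G) :
    ((D.DCF r).card : ℂ) * ∑ i : Fin (D.s + 1),
        ((D.d i : ℂ) / (Fintype.card G : ℂ)) * (D.om i ((D.g r)⁻¹) * D.om i y)
      = if y ∈ D.DC r then 1 else 0 := by
  have hyt : y ∈ D.DC (D.cIdx y) := D.mem_DC_cIdx y
  have hrw : ∀ i, D.om i y = D.om i (D.g (D.cIdx y)) :=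
    fun i => D.om_const_on_DC i (D.cIdx y) hyt
  simp only [hrw]
  rw [D.col_orth r (D.cIdx y)]
  have hmem : (y ∈ D.DC r) ↔ (r = D.cIdx y) := by
    constructor
    · intro h
      exact D.DC_unique h hyt
    · rintro rfl
      exact hyt
  by_cases h : r = D.cIdx y
  · rw [if_pos h, if_pos (hmem.mpr h)]
    field_simp [D.DCFcard_ne r]
  · rw [if_neg h, if_neg (fun hy => h (hmem.mp hy))]
    simp

lemma count_eq (u r : Fin (D.s + 1)) (m : ℕ) (hm : 1 ≤ m) :
    ((Finset.univ.filter (fun x : Fin m → G =>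
        (∀ j, x j ∈ D.DC u) ∧ (List.ofFn x).prod ∈ D.DC r)).card : ℂ)
      = ((D.DCF r).card : ℂ) * ∑ i : Fin (D.s + 1),
          ((D.d i : ℂ) / (Fintype.card G : ℂ)) *
          (D.om i ((D.g r)⁻¹) * (((D.DCF u).card : ℂ) * D.om i (D.g u)) ^ m) := by
  classical
  have h1 : ((Finset.univ.filter (fun x : Fin m → G =>
        (∀ j, x j ∈ D.DC u) ∧ (List.ofFn x).prod ∈ D.DC r)).card : ℂ)
      = ∑ x ∈ Fintype.piFinset (fun _ : Fin m => D.DCF u),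
          (if (List.ofFn x).prod ∈ D.DC r then (1 : ℂ) else 0) := by
    rw [Finset.card_filter]
    push_cast
    have hh := Finset.sum_ite_mem Finset.univ (Fintype.piFinset (fun _ : Fin m => D.DCF u))
      (fun x => if (List.ofFn x).prod ∈ D.DC r then (1 : ℂ) else 0)
    rw [Finset.univ_inter] at hh
    rw [← hh]
    refine Finset.sum_congr rfl fun x _ => ?_
    by_cases hx : ∀ j, x j ∈ D.DC u
    · have hmem : x ∈ Fintype.piFinset (fun _ : Fin m => D.DCF u) :=
        Fintype.mem_piFinset.mpr (fun j => D.mem_DCF.mpr (hx j))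
      rw [if_pos hmem]
      by_cases hq : (List.ofFn x).prod ∈ D.DC r
      · rw [if_pos ⟨hx, hq⟩, if_pos hq]
      · rw [if_neg (fun h => hq h.2), if_neg hq]
    · have hmem : x ∉ Fintype.piFinset (fun _ : Fin m => D.DCF u) :=
        fun h => hx (fun j => D.mem_DCF.mp (Fintype.mem_piFinset.mp h j))
      rw [if_neg hmem, if_neg (fun h => hx h.1)]
  rw [h1]
  have h2 : ∀ x ∈ Fintype.piFinset (fun _ : Fin m => D.DCF u),
      (if (List.ofFn x).prod ∈ D.DC r then (1 : ℂ) else 0)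
        = ((D.DCF r).card : ℂ) * ∑ i : Fin (D.s + 1),
            ((D.d i : ℂ) / (Fintype.card G : ℂ)) *
            (D.om i ((D.g r)⁻¹) * D.om i ((List.ofFn x).prod)) :=
    fun x _ => (D.indicator_DC r _).symm
  rw [Finset.sum_congr rfl h2, ← Finset.mul_sum]
  congr 1
  rw [Finset.sum_comm]
  refine Finset.sum_congr rfl fun i _ => ?_
  rw [← Finset.mul_sum, ← Finset.mul_sum, D.tuple_om_sum i u m hm]

theorem stmt12' (u r : Fin (D.s + 1)) (m : ℕ) (hm : 1 ≤ m) :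
    (((Set.ncard {x : Fin m → G | (∀ j, x j ∈ D.DC u) ∧ (List.ofFn x).prod ∈ D.DC r} : ℝ) /
        (Set.ncard (D.DC u) : ℝ) ^ m : ℝ) : ℂ) =
      (Set.ncard (D.DC r) : ℂ) *
        ∑ i : Fin (D.s + 1), ((D.d i : ℂ) / (Fintype.card G : ℂ)) *
          (D.ω i (D.g u)) ^ m * (starRingEnd ℂ) (D.ω i (D.g r)) := by
  classical
  have hnum : Set.ncard {x : Fin m → G | (∀ j, x j ∈ D.DC u) ∧ (List.ofFn x).prod ∈ D.DC r}
      = (Finset.univ.filter (fun x : Fin m → G =>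
          (∀ j, x j ∈ D.DC u) ∧ (List.ofFn x).prod ∈ D.DC r)).card := by
    rw [Set.ncard_eq_toFinset_card']
    congr 1
    simp [Set.toFinset_setOf]
  have hden : ∀ t : Fin (D.s + 1), Set.ncard (D.DC t) = (D.DCF t).card := by
    intro t
    rw [Set.ncard_eq_toFinset_card']
    rfl
  have hLHS : (((Set.ncard {x : Fin m → G | (∀ j, x j ∈ D.DC u) ∧ (List.ofFn x).prod ∈ D.DC r} : ℝ) /
        (Set.ncard (D.DC u) : ℝ) ^ m : ℝ) : ℂ)
      = ((Finset.univ.filter (fun x : Fin m → G =>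
          (∀ j, x j ∈ D.DC u) ∧ (List.ofFn x).prod ∈ D.DC r)).card : ℂ)
        / ((D.DCF u).card : ℂ) ^ m := by
    rw [hnum, hden u]
    push_cast
    ring
  rw [hLHS]
  set Q : ℂ := ((D.DCF r).card : ℂ) * ∑ i : Fin (D.s + 1),
      ((D.d i : ℂ) / (Fintype.card G : ℂ)) *
      (D.om i ((D.g r)⁻¹) * D.om i (D.g u) ^ m) with hQdef
  have hQ : ((Finset.univ.filter (fun x : Fin m → G =>
          (∀ j, x j ∈ D.DC u) ∧ (List.ofFn x).prod ∈ D.DC r)).card : ℂ)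
        / ((D.DCF u).card : ℂ) ^ m = Q := by
    rw [div_eq_iff (pow_ne_zero m (D.DCFcard_ne u)), D.count_eq u r m hm, hQdef,
      mul_assoc, Finset.sum_mul]
    congr 1
    refine Finset.sum_congr rfl fun i _ => ?_
    rw [mul_pow]
    ring
  rw [hQ]
  have hcq : (starRingEnd ℂ) Q = ((D.DCF r).card : ℂ) * ∑ i : Fin (D.s + 1),
      ((D.d i : ℂ) / (Fintype.card G : ℂ)) *
      (D.om i (D.g r) * D.om i ((D.g u)⁻¹) ^ m) := by
    rw [hQdef, map_mul, map_sum, map_natCast]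
    congr 1
    refine Finset.sum_congr rfl fun i _ => ?_
    rw [map_mul, map_mul, map_pow, map_div₀, map_natCast, map_natCast, D.om_conj, D.om_conj,
      inv_inv]
  have hRHS : (Set.ncard (D.DC r) : ℂ) *
        ∑ i : Fin (D.s + 1), ((D.d i : ℂ) / (Fintype.card G : ℂ)) *
          (D.ω i (D.g u)) ^ m * (starRingEnd ℂ) (D.ω i (D.g r))
      = (starRingEnd ℂ) Q := by
    rw [hcq, hden r]
    congr 1
    refine Finset.sum_congr rfl fun i _ => ?_
    rw [D.ω_eq_om i (D.g u), D.ω_eq_om i (D.g r), D.om_conj, inv_inv]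
    ring
  rw [hRHS]
  have hconjQ : (starRingEnd ℂ) Q = Q := by
    rw [← hQ, map_div₀, map_pow, map_natCast, map_natCast]
  rw [hconjQ]

end GelfandPairData

/-- **Lemma (fourier)**: for the `K`-biinvariant probability concentrated on the double coset
`K_u`, the `m`-step distribution is `p_m(K_r) = |K_r| Σ_i (d_i/|G|) ω_i(g_u)^m conj(ω_i(g_r))`,
where `p_m(K_r)` is the probability that a product of `m` independent uniform elements of
`K_u` lies in `K_r`. -/
theorem stmt12 {G : Type} [Group G] [Fintype G] (D : GelfandPairData G)
    (u r : Fin (D.s + 1)) (m : ℕ) (hm : 1 ≤ m) :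
    (((Set.ncard {x : Fin m → G | (∀ j, x j ∈ D.DC u) ∧ (List.ofFn x).prod ∈ D.DC r} : ℝ) /
        (Set.ncard (D.DC u) : ℝ) ^ m : ℝ) : ℂ) =
      (Set.ncard (D.DC r) : ℂ) *
        ∑ i : Fin (D.s + 1), ((D.d i : ℂ) / (Fintype.card G : ℂ)) *
          (D.ω i (D.g u)) ^ m * (starRingEnd ℂ) (D.ω i (D.g r)) :=
  D.stmt12' u r m hm
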